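/- arXiv:1902.05944 — 8 statements merged into one kernel-verified Lean document; each statement's English description precedes it below -/
import Mathlib

section
/- For every integer n ≥ 1, F_{n+1}^3 + F_n^3 - F_{n-1}^3 = F_{3n}. -/
theorem stmt_0 (n : ℕ) (hn : 1 ≤ n) :
    (Nat.fib (n + 1) : ℤ) ^ 3 + (Nat.fib n : ℤ) ^ 3 - (Nat.fib (n - 1) : ℤ) ^ 3 =
      Nat.fib (3 * n) := by
  obtain ⟨m, rfl⟩ := Nat.exists_eq_add_of_le hn
  have h1 : 3 * (1 + m) = (m + 1) + (2 * m + 1) + 1 := by ring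
  rw [h1, Nat.fib_add (m + 1) (2 * m + 1), Nat.fib_two_mul_add_one]
  have h2 : 2 * m + 1 + 1 = 2 * m + 2 := rfl
  rw [h2, Nat.fib_two_mul_add_two]
  have h3 : 1 + m - 1 = m := by omega
  have h4 : 1 + m = m + 1 := by ring
  rw [h3, h4]
  have h5 : Nat.fib (m + 1 + 1) = Nat.fib m + Nat.fib (m + 1) := Nat.fib_add_two
  push_cast [h5]
  ring
end

section
/- For every integer n ≥ 0, 5·F_n^3 = F_{3n} - 3·(-1)^n·F_n. -/
lemma cassini (n : ℕ) :
    ((Nat.fib (n+1) : ℤ))^2 - Nat.fib (n+1) * Nat.fib n - (Nat.fib n)^2 = (-1)^n := by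
  induction n with
  | zero => simp
  | succ k ih =>
    rw [Nat.fib_add_two]
    push_cast
    push_cast at ih
    ring_nf
    ring_nf at ih
    linarith [ih]

theorem stmt_1 (n : ℕ) :
    5 * (Nat.fib n : ℤ) ^ 3 = (Nat.fib (3 * n) : ℤ) - 3 * (-1) ^ n * Nat.fib n := by
  set a : ℤ := (Nat.fib n : ℤ) with ha
  set b : ℤ := (Nat.fib (n+1) : ℤ) with hb
  have h1 : Nat.fib (2*n+1) = Nat.fib n ^ 2 + Nat.fib (n+1) ^ 2 := by
    have := Nat.fib_add n n; rw [show n + n + 1 = 2*n+1 by ring] at this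
    rw [this]; ring
  have h2 : Nat.fib (2*n+2) = Nat.fib n * Nat.fib (n+1) + Nat.fib (n+1) * Nat.fib (n+2) := by
    have := Nat.fib_add n (n+1); rw [show n + (n+1) + 1 = 2*n+2 by ring] at this
    rw [this]
  have h3 : Nat.fib (3*n+1) = Nat.fib (2*n) * Nat.fib n + Nat.fib (2*n+1) * Nat.fib (n+1) := by
    have := Nat.fib_add (2*n) n; rw [show 2*n + n + 1 = 3*n+1 by ring] at this
    rw [this]
  have h4 : Nat.fib (3*n+2) = Nat.fib (2*n+1) * Nat.fib n + Nat.fib (2*n+2) * Nat.fib (n+1) := by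
    have := Nat.fib_add (2*n+1) n; rw [show 2*n+1 + n + 1 = 3*n+2 by ring] at this
    rw [this]
  have e1 : (Nat.fib (2*n+2) : ℤ) = Nat.fib (2*n) + Nat.fib (2*n+1) := by
    exact_mod_cast congrArg (Nat.cast : ℕ → ℤ) (Nat.fib_add_two (n := 2*n))
  have e2 : (Nat.fib (3*n+2) : ℤ) = Nat.fib (3*n) + Nat.fib (3*n+1) := by
    exact_mod_cast congrArg (Nat.cast : ℕ → ℤ) (Nat.fib_add_two (n := 3*n))
  have e3 : (Nat.fib (n+2) : ℤ) = a + b := by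
    rw [ha, hb]; exact_mod_cast congrArg (Nat.cast : ℕ → ℤ) (Nat.fib_add_two (n := n))
  have c : b^2 - b*a - a^2 = (-1)^n := cassini n
  have h1' : (Nat.fib (2*n+1) : ℤ) = a ^ 2 + b ^ 2 := by rw [ha, hb]; exact_mod_cast h1
  have h2' : (Nat.fib (2*n+2) : ℤ) = a * b + b * Nat.fib (n+2) := by rw [ha, hb]; exact_mod_cast h2
  have h3' : (Nat.fib (3*n+1) : ℤ) = Nat.fib (2*n) * a + Nat.fib (2*n+1) * b := by rw [ha, hb]; exact_mod_cast h3
  have h4' : (Nat.fib (3*n+2) : ℤ) = Nat.fib (2*n+1) * a + Nat.fib (2*n+2) * b := by rw [ha, hb]; exact_mod_cast h4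
  have f2 : (Nat.fib (2*n) : ℤ) = 2*a*b - a^2 := by
    linear_combination -e1 + h2' + b * e3 - h1'
  have f22 : (Nat.fib (2*n+2) : ℤ) = 2*a*b + b^2 := by
    linear_combination h2' + b * e3
  have f31 : (Nat.fib (3*n+1) : ℤ) = 3*a^2*b - a^3 + b^3 := by
    linear_combination h3' + a*f2 + b*h1'
  have f32 : (Nat.fib (3*n+2) : ℤ) = a^3 + 3*a*b^2 + b^3 := by
    linear_combination h4' + a*h1' + b*f22
  have f3 : (Nat.fib (3*n) : ℤ) = 2*a^3 + 3*a*b^2 - 3*a^2*b := by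
    linear_combination f32 - f31 - e2
  linear_combination -f3 - 3*a*c
end

section
/- For every integer n ≥ 2, F_{n+2}^3 - 3·F_n^3 + F_{n-2}^3 = 3·F_{3n}. -/
theorem stmt_4 (n : ℕ) (hn : 2 ≤ n) :
    (Nat.fib (n + 2) : ℤ) ^ 3 - 3 * (Nat.fib n : ℤ) ^ 3 + (Nat.fib (n - 2) : ℤ) ^ 3 =
      3 * Nat.fib (3 * n) := by
  obtain ⟨m, rfl⟩ : ∃ m, n = m + 2 := ⟨n - 2, by omega⟩
  simp only [Nat.add_sub_cancel]
  have h3 : 3 * (m + 2) = (m + 2) + (2 * m + 3) + 1 := by ring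
  have h2a : 2 * m + 3 = m + (m + 2) + 1 := by ring
  have h2b : 2 * m + 4 = (m + 1) + (m + 2) + 1 := by ring
  have e0 : Nat.fib ((m + 2) + (2 * m + 3) + 1) =
      Nat.fib (m + 2) * Nat.fib (2 * m + 3) + Nat.fib (m + 2 + 1) * Nat.fib (2 * m + 3 + 1) :=
    Nat.fib_add _ _
  rw [h3, e0]
  have e1 : Nat.fib (2 * m + 3) = Nat.fib m * Nat.fib (m + 2) + Nat.fib (m + 1) * Nat.fib (m + 3) := by
    rw [h2a, Nat.fib_add]
  have e2 : Nat.fib (2 * m + 3 + 1) = Nat.fib (m + 1) * Nat.fib (m + 2) + Nat.fib (m + 2) * Nat.fib (m + 3) := by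
    have : 2 * m + 3 + 1 = (m + 1) + (m + 2) + 1 := by ring
    rw [this, Nat.fib_add]
  rw [e1, e2]
  have f4 : Nat.fib (m + 2 + 2) = Nat.fib (m + 2) + Nat.fib (m + 3) := Nat.fib_add_two
  have f3 : Nat.fib (m + 3) = Nat.fib (m + 1) + Nat.fib (m + 2) := by
    have := Nat.fib_add_two (n := m + 1); simpa [Nat.add_assoc] using this
  have f2 : Nat.fib (m + 2) = Nat.fib m + Nat.fib (m + 1) := Nat.fib_add_two
  rw [f4, f3, f2]
  push_cast
  ring
end

section
/- For every integer n ≥ 0, 2·∑_{k=0}^{n} (-1)^k·F_k·F_{k+1}^2 = (-1)^n·F_n·F_{n+1}·F_{n+2}. -/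
theorem stmt_10 (n : ℕ) :
    2 * ∑ k ∈ Finset.range (n + 1), (-1) ^ k * (Nat.fib k : ℤ) * (Nat.fib (k + 1) : ℤ) ^ 2 =
      (-1) ^ n * (Nat.fib n : ℤ) * Nat.fib (n + 1) * Nat.fib (n + 2) := by
  induction n with
  | zero => simp
  | succ n ih =>
    rw [Finset.sum_range_succ, mul_add, ih]
    have h1 : (Nat.fib (n + 2) : ℤ) = Nat.fib n + Nat.fib (n + 1) := by
      rw [Nat.fib_add_two]; push_cast; ring
    have h2 : (Nat.fib (n + 3) : ℤ) = Nat.fib (n + 1) + Nat.fib (n + 2) := by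
      rw [show n + 3 = (n+1) + 2 from rfl, Nat.fib_add_two]; push_cast; ring
    rw [show n + 1 + 2 = n + 3 from rfl, h2, h1]
    ring
end

section
/- For every integer n ≥ 0, 2·∑_{k=0}^{n} (-1)^k·F_{k+1}^3 = (-1)^n·(F_{n+1}^2·F_{n+4} - F_n·F_{n+2}·F_{n+3}) - 1. -/
theorem stmt_11 (n : ℕ) :
    2 * ∑ k ∈ Finset.range (n + 1), (-1) ^ k * (Nat.fib (k + 1) : ℤ) ^ 3 =
      (-1) ^ n * ((Nat.fib (n + 1) : ℤ) ^ 2 * Nat.fib (n + 4) -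
        (Nat.fib n : ℤ) * Nat.fib (n + 2) * Nat.fib (n + 3)) - 1 := by
  induction n with
  | zero => norm_num [show Nat.fib 4 = 3 from rfl]
  | succ m ih =>
    rw [Finset.sum_range_succ, mul_add, ih]
    have h4 : (Nat.fib (m + 5) : ℤ) = Nat.fib (m + 4) + Nat.fib (m + 3) := by
      rw [show m + 5 = (m + 3) + 2 from rfl, Nat.fib_add_two]; push_cast; ring
    have h3 : (Nat.fib (m + 4) : ℤ) = Nat.fib (m + 3) + Nat.fib (m + 2) := by
      rw [show m + 4 = (m + 2) + 2 from rfl, Nat.fib_add_two]; push_cast; ring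
    have h2 : (Nat.fib (m + 3) : ℤ) = Nat.fib (m + 2) + Nat.fib (m + 1) := by
      rw [show m + 3 = (m + 1) + 2 from rfl, Nat.fib_add_two]; push_cast; ring
    have h1 : (Nat.fib (m + 2) : ℤ) = Nat.fib (m + 1) + Nat.fib m := by
      rw [Nat.fib_add_two]; push_cast; ring
    rw [h4, h3, h2, h1]
    ring
end

section
/- For every integer n ≥ 0, F_{n+4}^3 + 3·F_{n+1}^3 + F_n^3 = 3·F_{n+3}^3 + 6·F_{n+2}^3. -/
theorem stmt_12 (n : ℕ) :
    (Nat.fib (n + 4) : ℤ) ^ 3 + 3 * (Nat.fib (n + 1) : ℤ) ^ 3 + (Nat.fib n : ℤ) ^ 3 =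
      3 * (Nat.fib (n + 3) : ℤ) ^ 3 + 6 * (Nat.fib (n + 2) : ℤ) ^ 3 := by
  have e2 : Nat.fib (n + 2) = Nat.fib n + Nat.fib (n + 1) := Nat.fib_add_two
  have e3 : Nat.fib (n + 3) = Nat.fib (n + 1) + Nat.fib (n + 2) := Nat.fib_add_two
  have e4 : Nat.fib (n + 4) = Nat.fib (n + 2) + Nat.fib (n + 3) := Nat.fib_add_two
  rw [e4, e3, e2]
  push_cast
  ring
end

section
/- For all integers r ≥ 1, s ≥ 1, and t ≥ 1, F_{r+1}·F_{s+1}·F_{t+1} + F_r·F_s·F_t - F_{r-1}·F_{s-1}·F_{t-1} = F_{r+s+t}. -/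
lemma fib_aux (a b c : ℕ) :
    (Nat.fib (a + 2) : ℤ) * Nat.fib (b + 2) * Nat.fib (c + 2) +
      (Nat.fib (a + 1) : ℤ) * Nat.fib (b + 1) * Nat.fib (c + 1) -
      (Nat.fib a : ℤ) * Nat.fib b * Nat.fib c =
      Nat.fib (a + b + c + 3) := by
  have h1 : a + b + c + 3 = (a + b + 1) + (c + 1) + 1 := by ring
  have h2 : a + b + 2 = a + (b + 1) + 1 := by ring
  have h3 : a + b + 1 = a + b + 1 := rfl
  rw [h1]
  conv_rhs => rw [Nat.fib_add, show a + b + 1 + 1 = a + (b + 1) + 1 from by ring,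
    Nat.fib_add, Nat.fib_add]
  simp only [show b + 1 + 1 = b + 2 from rfl, show c + 1 + 1 = c + 2 from rfl,
    Nat.fib_add_two]
  push_cast
  ring

theorem stmt_13 (r s t : ℕ) (hr : 1 ≤ r) (hs : 1 ≤ s) (ht : 1 ≤ t) :
    (Nat.fib (r + 1) : ℤ) * Nat.fib (s + 1) * Nat.fib (t + 1) +
      (Nat.fib r : ℤ) * Nat.fib s * Nat.fib t -
      (Nat.fib (r - 1) : ℤ) * Nat.fib (s - 1) * Nat.fib (t - 1) =
      Nat.fib (r + s + t) := by
  obtain ⟨a, rfl⟩ : ∃ a, r = a + 1 := ⟨r - 1, (Nat.succ_pred_eq_of_pos hr).symm⟩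
  obtain ⟨b, rfl⟩ : ∃ b, s = b + 1 := ⟨s - 1, (Nat.succ_pred_eq_of_pos hs).symm⟩
  obtain ⟨c, rfl⟩ : ∃ c, t = c + 1 := ⟨t - 1, (Nat.succ_pred_eq_of_pos ht).symm⟩
  simp only [Nat.add_sub_cancel]
  have := fib_aux a b c
  have h : a + 1 + (b + 1) + (c + 1) = a + b + c + 3 := by ring
  rw [h]
  convert this using 2
end

section
/- For all integers k ≥ 0, r ≥ 0, m ≥ 0, and n ≥ 0, F_m^k·F_n = (-1)^{kr}·∑_{h=0}^{k} C(k,h)·(-1)^h·F_r^h·F_{r+m}^{k-h}·F_{n+kr+hm}, where C(k,h) denotes the binomial coefficient. -/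
open goldenRatio

private lemma keyφ (r m : ℕ) :
    (Nat.fib (r + m) : ℝ) - (Nat.fib r : ℝ) * φ ^ m = (Nat.fib m : ℝ) * ψ ^ r := by
  rw [Real.coe_fib_eq, Real.coe_fib_eq, Real.coe_fib_eq, pow_add]
  have : (Real.sqrt 5) ≠ 0 := by positivity
  field_simp
  ring

private lemma keyψ (r m : ℕ) :
    (Nat.fib (r + m) : ℝ) - (Nat.fib r : ℝ) * ψ ^ m = (Nat.fib m : ℝ) * φ ^ r := by
  rw [Real.coe_fib_eq, Real.coe_fib_eq, Real.coe_fib_eq, pow_add]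
  have : (Real.sqrt 5) ≠ 0 := by positivity
  field_simp
  ring

theorem stmt_15 (k r m n : ℕ) :
    (Nat.fib m : ℤ) ^ k * Nat.fib n =
      (-1) ^ (k * r) * ∑ h ∈ Finset.range (k + 1),
        (Nat.choose k h : ℤ) * (-1) ^ h * (Nat.fib r : ℤ) ^ h *
          (Nat.fib (r + m) : ℤ) ^ (k - h) * Nat.fib (n + k * r + h * m) := by
  have h5 : (Real.sqrt 5) ≠ 0 := by positivity
  have H : ((Nat.fib m : ℝ)) ^ k * Nat.fib n =
      (-1) ^ (k * r) * ∑ h ∈ Finset.range (k + 1),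
        (Nat.choose k h : ℝ) * (-1) ^ h * (Nat.fib r : ℝ) ^ h *
          (Nat.fib (r + m) : ℝ) ^ (k - h) * Nat.fib (n + k * r + h * m) := by
    have hsum : ∑ h ∈ Finset.range (k + 1),
        (Nat.choose k h : ℝ) * (-1) ^ h * (Nat.fib r : ℝ) ^ h *
          (Nat.fib (r + m) : ℝ) ^ (k - h) * Nat.fib (n + k * r + h * m)
        = (φ ^ (n + k * r) * ((Nat.fib (r + m) : ℝ) - (Nat.fib r : ℝ) * φ ^ m) ^ k
          - ψ ^ (n + k * r) * ((Nat.fib (r + m) : ℝ) - (Nat.fib r : ℝ) * ψ ^ m) ^ k)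
          / Real.sqrt 5 := by
      rw [sub_eq_neg_add ((Nat.fib (r+m):ℝ)) ((Nat.fib r : ℝ) * φ ^ m),
          sub_eq_neg_add ((Nat.fib (r+m):ℝ)) ((Nat.fib r : ℝ) * ψ ^ m),
          add_pow, add_pow, Finset.mul_sum, Finset.mul_sum,
          ← Finset.sum_sub_distrib, Finset.sum_div]
      apply Finset.sum_congr rfl
      intro h hh
      rw [Real.coe_fib_eq (n + k * r + h * m), pow_add, pow_add, pow_mul, pow_mul, ← mul_div_assoc,
          div_eq_div_iff h5 h5]
      ring
    rw [hsum, keyφ, keyψ, mul_pow, mul_pow, ← pow_mul, ← pow_mul,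
        Real.coe_fib_eq n]
    have h3 : φ ^ (n + k*r) * ((Nat.fib m : ℝ)^k * ψ^(r*k))
        - ψ ^ (n + k*r) * ((Nat.fib m : ℝ)^k * φ^(r*k))
        = (-1 : ℝ)^(k*r) * ((Nat.fib m : ℝ)^k * (φ^n - ψ^n)) := by
      have h1 : ((-1:ℝ))^(k*r) = (φ*ψ)^(k*r) := by rw [Real.goldenRatio_mul_goldenConj]
      rw [h1, mul_pow, pow_add, pow_add, mul_comm r k]
      ring
    rw [h3]
    have h4 : ((-1:ℝ))^(k*r*2) = 1 := by
      rw [mul_comm, pow_mul, neg_one_sq, one_pow]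
    ring_nf
    rw [h4]
    ring_nf
  exact_mod_cast H
end
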